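/- arXiv:2206.06727 — 2 statements merged into one kernel-verified Lean document; each statement's English description precedes it below -/
import Mathlib

section
/- Equality case of Maclaurin: for nonnegative reals x_1,…,x_n with H_{r}>0, if H_{r}^{1/r} = H_1 for some r ∈ {2,…,n}, then x_1 = x_2 = ⋯ = x_n. -/
open Finset

lemma sum_insert_erase (n m : ℕ) (F : Finset (Fin n) → Fin n → ℝ) :
    ∑ A ∈ Finset.powersetCard (m+1) Finset.univ, ∑ i ∈ A, F (A.erase i) i
    = ∑ B ∈ Finset.powersetCard m Finset.univ, ∑ i ∈ Finset.univ \ B, F B i := by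
  rw [Finset.sum_sigma', Finset.sum_sigma']
  refine Finset.sum_nbij' (fun p => ⟨p.1.erase p.2, p.2⟩) (fun p => ⟨insert p.2 p.1, p.2⟩)
    ?_ ?_ ?_ ?_ ?_
  · rintro ⟨A, i⟩ hp
    simp only [Finset.mem_sigma, Finset.mem_powersetCard] at hp ⊢
    obtain ⟨⟨hA, hcard⟩, hi⟩ := hp
    refine ⟨⟨Finset.subset_univ _, ?_⟩, ?_⟩
    · rw [Finset.card_erase_of_mem hi, hcard]; rfl
    · simp [Finset.mem_sdiff]
  · rintro ⟨B, i⟩ hp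
    simp only [Finset.mem_sigma, Finset.mem_powersetCard, Finset.mem_sdiff] at hp ⊢
    obtain ⟨⟨hB, hcard⟩, _, hi⟩ := hp
    refine ⟨⟨Finset.subset_univ _, ?_⟩, Finset.mem_insert_self _ _⟩
    rw [Finset.card_insert_of_notMem hi, hcard]
  · rintro ⟨A, i⟩ hp
    simp only [Finset.mem_sigma, Finset.mem_powersetCard] at hp
    exact Sigma.ext (by simp [Finset.insert_erase hp.2]) (by simp)
  · rintro ⟨B, i⟩ hp
    simp only [Finset.mem_sigma, Finset.mem_powersetCard, Finset.mem_sdiff] at hp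
    exact Sigma.ext (by simp [Finset.erase_insert hp.2.2]) (by simp)
  · rintro ⟨A, i⟩ _; rfl

lemma expand_sq {ι : Type*} (s : Finset ι) (f : ι → ℝ) :
    ∑ i ∈ s, ∑ j ∈ s, (f i - f j)^2
      = 2 * s.card * (∑ i ∈ s, f i ^ 2) - 2 * (∑ i ∈ s, f i)^2 := by
  have h : ∀ i, ∑ j ∈ s, (f i - f j)^2
      = s.card * f i ^2 - 2 * f i * (∑ j ∈ s, f j) + ∑ j ∈ s, f j ^2 := by
    intro i
    rw [Finset.sum_congr rfl (fun j _ => by ring_nf :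
      ∀ j ∈ s, (f i - f j)^2 = f i ^2 - 2 * f i * f j + f j ^2)]
    rw [Finset.sum_add_distrib, Finset.sum_sub_distrib, Finset.sum_const, ← Finset.mul_sum]
    push_cast; ring
  rw [Finset.sum_congr rfl (fun i _ => h i), Finset.sum_add_distrib, Finset.sum_sub_distrib,
    ← Finset.mul_sum, ← Finset.sum_mul, Finset.sum_const,
    show (∑ x ∈ s, 2 * f x) = 2 * ∑ x ∈ s, f x from (Finset.mul_sum _ _ _).symm]
  push_cast; ring

lemma cs_sq {ι : Type*} (s : Finset ι) (f : ι → ℝ) :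
    (∑ i ∈ s, f i)^2 ≤ s.card * ∑ i ∈ s, f i ^ 2 := by
  nlinarith [expand_sq s f, Finset.sum_nonneg (fun i (_ : i ∈ s) =>
    Finset.sum_nonneg (fun j (_ : j ∈ s) => sq_nonneg (f i - f j)))]

lemma offdiag_sq {ι : Type*} [DecidableEq ι] (s : Finset ι) (f : ι → ℝ) :
    ∑ i ∈ s, ∑ j ∈ s.erase i, f i * f j ≤ ((s.card : ℝ) - 1) * ∑ i ∈ s, f i ^ 2 := by
  have h : ∀ i ∈ s, ∑ j ∈ s.erase i, f i * f j = f i * (∑ j ∈ s, f j) - f i ^2 := by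
    intro i hi
    rw [← Finset.mul_sum, Finset.sum_erase_eq_sub hi]; ring
  rw [Finset.sum_congr rfl h, Finset.sum_sub_distrib, ← Finset.sum_mul]
  nlinarith [cs_sq s f]

/-- The `k`-th elementary symmetric polynomial of `x : Fin n → ℝ`. -/
noncomputable def esymmS (n : ℕ) (x : Fin n → ℝ) (k : ℕ) : ℝ :=
  ∑ A ∈ Finset.powersetCard k (Finset.univ : Finset (Fin n)), ∏ i ∈ A, x i

noncomputable def Tt (n : ℕ) (x : Fin n → ℝ) (p : ℕ) : ℝ :=
  ∑ B ∈ Finset.powersetCard p (Finset.univ : Finset (Fin n)), ∑ i ∈ B,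
    (x i)^2 * ∏ j ∈ B.erase i, x j

lemma identA (n : ℕ) (x : Fin n → ℝ) (p : ℕ) :
    (∑ i, x i) * esymmS n x p = (p+1 : ℝ) * esymmS n x (p+1) + Tt n x p := by
  have key : ∑ A ∈ Finset.powersetCard (p+1) (Finset.univ : Finset (Fin n)),
      ∑ i ∈ A, x i * ∏ j ∈ A.erase i, x j
      = ∑ B ∈ Finset.powersetCard p (Finset.univ : Finset (Fin n)),
        ∑ i ∈ Finset.univ \ B, x i * ∏ j ∈ B, x j :=
    sum_insert_erase n p (fun B i => x i * ∏ j ∈ B, x j)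
  have lhs_eq : ∀ A ∈ Finset.powersetCard (p+1) (Finset.univ : Finset (Fin n)),
      ∑ i ∈ A, x i * ∏ j ∈ A.erase i, x j = (p+1 : ℝ) * ∏ j ∈ A, x j := by
    intro A hA
    rw [Finset.mem_powersetCard] at hA
    rw [Finset.sum_congr rfl (fun i hi => Finset.mul_prod_erase A x hi),
      Finset.sum_const, hA.2]
    push_cast; ring
  rw [Finset.sum_congr rfl lhs_eq, ← Finset.mul_sum] at key
  -- now expand LHS
  unfold esymmS Tt
  rw [Finset.mul_sum]
  have split : ∀ B ∈ Finset.powersetCard p (Finset.univ : Finset (Fin n)),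
      (∑ i, x i) * ∏ j ∈ B, x j
      = (∑ i ∈ Finset.univ \ B, x i * ∏ j ∈ B, x j)
        + ∑ i ∈ B, (x i)^2 * ∏ j ∈ B.erase i, x j := by
    intro B hB
    have h1 : ∑ i ∈ B, (x i)^2 * ∏ j ∈ B.erase i, x j = ∑ i ∈ B, x i * ∏ j ∈ B, x j := by
      refine Finset.sum_congr rfl (fun i hi => ?_)
      rw [← Finset.mul_prod_erase B x hi]; ring
    rw [h1, ← Finset.sum_mul, ← Finset.sum_mul, ← add_mul,
      Finset.sum_sdiff (Finset.subset_univ B)]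
  rw [Finset.sum_congr rfl split, Finset.sum_add_distrib, ← key]

lemma sdiff_insert_eq (n : ℕ) (B : Finset (Fin n)) (i : Fin n) :
    (Finset.univ : Finset (Fin n)) \ insert i B = ((Finset.univ : Finset (Fin n)) \ B).erase i := by
  ext j; simp [Finset.mem_sdiff, Finset.mem_erase]

lemma identB (n : ℕ) (x : Fin n → ℝ) (hx : ∀ i, 0 ≤ x i) (m : ℕ) :
    ((m:ℝ)+1)*((m:ℝ)+2) * esymmS n x (m+2) ≤ ((n:ℝ) - (m:ℝ) - 1) * Tt n x (m+1) := by
  have hT : Tt n x (m+1)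
      = ∑ B ∈ Finset.powersetCard m (Finset.univ : Finset (Fin n)),
          ∑ i ∈ Finset.univ \ B, (x i)^2 * ∏ j ∈ B, x j :=
    sum_insert_erase n m (fun B i => (x i)^2 * ∏ j ∈ B, x j)
  -- the off-diagonal triple sum U
  have hU1 : ∑ A ∈ Finset.powersetCard (m+1) (Finset.univ : Finset (Fin n)),
        ∑ i ∈ A, ∑ j ∈ Finset.univ \ (insert i (A.erase i)), x i * x j * ∏ k ∈ A.erase i, x k
      = ∑ B ∈ Finset.powersetCard m (Finset.univ : Finset (Fin n)),
        ∑ i ∈ Finset.univ \ B, ∑ j ∈ Finset.univ \ (insert i B), x i * x j * ∏ k ∈ B, x k :=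
    sum_insert_erase n m (fun B i => ∑ j ∈ Finset.univ \ (insert i B), x i * x j * ∏ k ∈ B, x k)
  have hU2 : ∑ A ∈ Finset.powersetCard (m+1) (Finset.univ : Finset (Fin n)),
        ∑ i ∈ A, ∑ j ∈ Finset.univ \ (insert i (A.erase i)), x i * x j * ∏ k ∈ A.erase i, x k
      = ∑ A ∈ Finset.powersetCard (m+1) (Finset.univ : Finset (Fin n)),
        ∑ j ∈ Finset.univ \ A, ∑ i ∈ A, x i * x j * ∏ k ∈ A.erase i, x k := by
    refine Finset.sum_congr rfl (fun A hA => ?_)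
    rw [Finset.mem_powersetCard] at hA
    rw [Finset.sum_congr rfl (fun i hi => by rw [Finset.insert_erase hi] :
      ∀ i ∈ A, ∑ j ∈ Finset.univ \ (insert i (A.erase i)), x i * x j * ∏ k ∈ A.erase i, x k
        = ∑ j ∈ Finset.univ \ A, x i * x j * ∏ k ∈ A.erase i, x k)]
    exact Finset.sum_comm
  have hU3 : ∑ C ∈ Finset.powersetCard (m+2) (Finset.univ : Finset (Fin n)),
        ∑ j ∈ C, ∑ i ∈ C.erase j, x i * x j * ∏ k ∈ (C.erase j).erase i, x k
      = ∑ A ∈ Finset.powersetCard (m+1) (Finset.univ : Finset (Fin n)),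
        ∑ j ∈ Finset.univ \ A, ∑ i ∈ A, x i * x j * ∏ k ∈ A.erase i, x k :=
    sum_insert_erase n (m+1) (fun B j => ∑ i ∈ B, x i * x j * ∏ k ∈ B.erase i, x k)
  have hU4 : ∑ C ∈ Finset.powersetCard (m+2) (Finset.univ : Finset (Fin n)),
        ∑ j ∈ C, ∑ i ∈ C.erase j, x i * x j * ∏ k ∈ (C.erase j).erase i, x k
      = ((m:ℝ)+1)*((m:ℝ)+2) * esymmS n x (m+2) := by
    unfold esymmS
    rw [Finset.mul_sum]
    refine Finset.sum_congr rfl (fun C hC => ?_)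
    rw [Finset.mem_powersetCard] at hC
    have inner : ∀ j ∈ C, ∑ i ∈ C.erase j, x i * x j * ∏ k ∈ (C.erase j).erase i, x k
        = ((m:ℝ)+1) * ∏ k ∈ C, x k := by
      intro j hj
      have : ∀ i ∈ C.erase j, x i * x j * ∏ k ∈ (C.erase j).erase i, x k = ∏ k ∈ C, x k := by
        intro i hi
        rw [mul_comm (x i) (x j), mul_assoc, Finset.mul_prod_erase _ x hi,
          Finset.mul_prod_erase _ x hj]
      rw [Finset.sum_congr rfl this, Finset.sum_const, Finset.card_erase_of_mem hj, hC.2]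
      push_cast; ring
    rw [Finset.sum_congr rfl inner, Finset.sum_const, hC.2]
    push_cast; ring
  -- pointwise bound per B
  have hB : ∀ B ∈ Finset.powersetCard m (Finset.univ : Finset (Fin n)),
      ∑ i ∈ Finset.univ \ B, ∑ j ∈ Finset.univ \ (insert i B), x i * x j * ∏ k ∈ B, x k
      ≤ ((n:ℝ) - (m:ℝ) - 1) * ∑ i ∈ Finset.univ \ B, (x i)^2 * ∏ j ∈ B, x j := by
    intro B hBm
    rw [Finset.mem_powersetCard] at hBm
    set s := (Finset.univ : Finset (Fin n)) \ B with hs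
    have hcard : (s.card : ℝ) = (n:ℝ) - (m:ℝ) := by
      rw [hs, Finset.card_sdiff_of_subset (Finset.subset_univ B), Finset.card_univ, Fintype.card_fin,
        hBm.2, Nat.cast_sub (hBm.2 ▸ (Finset.card_le_card hBm.1).trans_eq (by
          rw [Finset.card_univ, Fintype.card_fin]))]
    have hc : (0:ℝ) ≤ ∏ k ∈ B, x k := Finset.prod_nonneg (fun k _ => hx k)
    calc ∑ i ∈ s, ∑ j ∈ Finset.univ \ (insert i B), x i * x j * ∏ k ∈ B, x k
        = (∑ i ∈ s, ∑ j ∈ s.erase i, x i * x j) * ∏ k ∈ B, x k := by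
          rw [Finset.sum_mul]
          refine Finset.sum_congr rfl (fun i _ => ?_)
          rw [sdiff_insert_eq, Finset.sum_mul]
      _ ≤ (((s.card : ℝ) - 1) * ∑ i ∈ s, (x i)^2) * ∏ k ∈ B, x k :=
          mul_le_mul_of_nonneg_right (offdiag_sq s x) hc
      _ = ((n:ℝ) - (m:ℝ) - 1) * ∑ i ∈ s, (x i)^2 * ∏ j ∈ B, x j := by
          rw [hcard, mul_assoc, Finset.sum_mul]
  calc ((m:ℝ)+1)*((m:ℝ)+2) * esymmS n x (m+2)
      = ∑ B ∈ Finset.powersetCard m (Finset.univ : Finset (Fin n)),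
        ∑ i ∈ Finset.univ \ B, ∑ j ∈ Finset.univ \ (insert i B), x i * x j * ∏ k ∈ B, x k := by
        rw [← hU4, hU3, ← hU2, hU1]
    _ ≤ ∑ B ∈ Finset.powersetCard m (Finset.univ : Finset (Fin n)),
        ((n:ℝ) - (m:ℝ) - 1) * ∑ i ∈ Finset.univ \ B, (x i)^2 * ∏ j ∈ B, x j :=
        Finset.sum_le_sum hB
    _ = ((n:ℝ) - (m:ℝ) - 1) * Tt n x (m+1) := by rw [← Finset.mul_sum, hT]

/-- The normalized `k`-th elementary symmetric function `H_k = S_k(x)/C(n,k)`. -/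
noncomputable def normH (n : ℕ) (x : Fin n → ℝ) (k : ℕ) : ℝ :=
  esymmS n x k / (n.choose k)

lemma esymmS_one (n : ℕ) (x : Fin n → ℝ) : esymmS n x 1 = ∑ i, x i := by
  have key := sum_insert_erase n 0 (fun B i => x i * ∏ j ∈ B, x j)
  have lhs_eq : ∀ A ∈ Finset.powersetCard 1 (Finset.univ : Finset (Fin n)),
      ∑ i ∈ A, x i * ∏ j ∈ A.erase i, x j = ∏ j ∈ A, x j := by
    intro A hA
    rw [Finset.mem_powersetCard] at hA
    rw [Finset.sum_congr rfl (fun i hi => Finset.mul_prod_erase A x hi),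
      Finset.sum_const, hA.2, one_smul]
  rw [Finset.sum_congr rfl lhs_eq] at key
  unfold esymmS
  rw [key, Finset.powersetCard_zero, Finset.sum_singleton]
  simp

lemma esymmS_nonneg (n : ℕ) (x : Fin n → ℝ) (hx : ∀ i, 0 ≤ x i) (k : ℕ) :
    0 ≤ esymmS n x k :=
  Finset.sum_nonneg fun A _ => Finset.prod_nonneg fun i _ => hx i

lemma Tt_one (n : ℕ) (x : Fin n → ℝ) : Tt n x 1 = ∑ i, (x i)^2 := by
  have key := sum_insert_erase n 0 (fun B i => (x i)^2 * ∏ j ∈ B, x j)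
  unfold Tt
  rw [key, Finset.powersetCard_zero, Finset.sum_singleton]
  simp

lemma esymmS_two (n : ℕ) (x : Fin n → ℝ) :
    2 * esymmS n x 2 = (∑ i, x i)^2 - ∑ i, (x i)^2 := by
  have h := identA n x 1
  rw [esymmS_one, Tt_one] at h
  push_cast at h
  nlinarith [h]

lemma normH_step (n : ℕ) (x : Fin n → ℝ) (hx : ∀ i, 0 ≤ x i) (m : ℕ) (h : m + 2 ≤ n) :
    normH n x (m+2) ≤ normH n x 1 * normH n x (m+1) := by
  have hn' : (m:ℝ) + 2 ≤ (n:ℝ) := by exact_mod_cast h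
  have hn0 : (0:ℝ) < n := by linarith
  have hnm : (0:ℝ) < (n:ℝ) - m - 1 := by linarith
  have hC1 : (0:ℝ) < (n.choose (m+1) : ℝ) := by
    exact_mod_cast Nat.choose_pos (by omega)
  have hC2 : (0:ℝ) < (n.choose (m+2) : ℝ) := by
    exact_mod_cast Nat.choose_pos h
  have hchoose : ((m:ℝ)+2) * (n.choose (m+2) : ℝ) = ((n:ℝ) - m - 1) * (n.choose (m+1) : ℝ) := by
    have hnat := Nat.choose_succ_right_eq n (m+1)
    have : ((n.choose (m+2) : ℝ)) * ((m:ℝ)+2) = (n.choose (m+1) : ℝ) * ((n:ℝ) - (m+1)) := by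
      have hcast : ((n.choose (m+1+1) * (m+1+1) : ℕ) : ℝ)
          = ((n.choose (m+1) * (n-(m+1)) : ℕ) : ℝ) := by exact_mod_cast hnat
      push_cast [Nat.cast_sub (show m+1 ≤ n by omega)] at hcast
      simp only [show m+1+1 = m+2 from rfl] at hcast
      linarith [hcast]
    linarith [this]
  have hA := identA n x (m+1)
  have hB := identB n x hx m
  push_cast at hA
  simp only [show m+1+1 = m+2 from rfl] at hA
  set Sx := ∑ i, x i with hSx
  set S1 := esymmS n x (m+1)
  set S2 := esymmS n x (m+2)
  set T := Tt n x (m+1)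
  have hA2 := congrArg (fun t => (((n:ℝ) - m - 1) * t)) hA
  have hc : ((m:ℝ)+2) * ((n:ℝ) * S2) ≤ ((n:ℝ) - m - 1) * (Sx * S1) := by nlinarith [hA2, hB]
  unfold normH
  rw [esymmS_one, ← hSx, Nat.choose_one_right]
  rw [div_mul_div_comm, div_le_div_iff₀ hC2 (by positivity)]
  have key : ((n:ℝ) - m - 1) * (S2 * ((n:ℝ) * (n.choose (m+1) : ℝ)))
      ≤ ((n:ℝ) - m - 1) * (Sx * S1 * (n.choose (m+2) : ℝ)) := by
    have e1 : ((n:ℝ) - m - 1) * (S2 * ((n:ℝ) * (n.choose (m+1) : ℝ)))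
        = (((m:ℝ)+2) * ((n:ℝ) * S2)) * (n.choose (m+2) : ℝ) := by
      rw [show ((n:ℝ) - m - 1) * (S2 * ((n:ℝ) * (n.choose (m+1) : ℝ)))
        = (((n:ℝ) - m - 1) * (n.choose (m+1) : ℝ)) * ((n:ℝ) * S2) from by ring, ← hchoose]
      ring
    rw [e1]
    calc (((m:ℝ)+2) * ((n:ℝ) * S2)) * (n.choose (m+2) : ℝ)
        ≤ (((n:ℝ) - m - 1) * (Sx * S1)) * (n.choose (m+2) : ℝ) :=
          mul_le_mul_of_nonneg_right hc hC2.le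
      _ = ((n:ℝ) - m - 1) * (Sx * S1 * (n.choose (m+2) : ℝ)) := by ring
  exact le_of_mul_le_mul_left key hnm

lemma normH_one_nonneg (n : ℕ) (x : Fin n → ℝ) (hx : ∀ i, 0 ≤ x i) :
    0 ≤ normH n x 1 := by
  unfold normH
  apply div_nonneg (esymmS_nonneg n x hx 1) (by positivity)

lemma normH_chain (n : ℕ) (x : Fin n → ℝ) (hx : ∀ i, 0 ≤ x i) :
    ∀ j, 2 + j ≤ n → normH n x (2+j) ≤ (normH n x 1)^j * normH n x 2 := by
  intro j
  induction j with
  | zero => intro _; simp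
  | succ j ih =>
    intro hjn
    have h1 : normH n x (2+(j+1)) ≤ normH n x 1 * normH n x (2+j) := by
      have e1 : 2+(j+1) = (j+1)+2 := by omega
      have e2 : 2+j = (j+1)+1 := by omega
      rw [e1, e2]
      exact normH_step n x hx (j+1) (by omega)
    have h2 := ih (by omega)
    calc normH n x (2+(j+1)) ≤ normH n x 1 * normH n x (2+j) := h1
      _ ≤ normH n x 1 * ((normH n x 1)^j * normH n x 2) :=
          mul_le_mul_of_nonneg_left h2 (normH_one_nonneg n x hx)
      _ = (normH n x 1)^(j+1) * normH n x 2 := by ring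

/-- Equality case of Maclaurin: for nonnegative `x` with `H_r > 0`, if
`H_r^{1/r} = H_1` for some `r ∈ {2,…,n}`, then all `x_i` are equal. -/
theorem maclaurin_equality_case (n r : ℕ) (hn : 2 ≤ n) (hr2 : 2 ≤ r) (hrn : r ≤ n)
    (x : Fin n → ℝ) (hx : ∀ i, 0 ≤ x i) (hpos : 0 < normH n x r)
    (heq : (normH n x r) ^ ((1 : ℝ) / r) = normH n x 1) :
    ∀ i j, x i = x j := by
  have hr0 : r ≠ 0 := by omega
  have hH1pos : 0 < normH n x 1 := heq ▸ Real.rpow_pos_of_pos hpos _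
  have hpow : normH n x 1 ^ r = normH n x r := by
    rw [← heq, one_div]
    exact Real.rpow_inv_natCast_pow hpos.le hr0
  have hch := normH_chain n x hx (r-2) (by omega)
  rw [show 2 + (r-2) = r from by omega] at hch
  -- H1^2 ≤ H2
  have hH2 : normH n x 1 ^ 2 ≤ normH n x 2 := by
    have h1 : normH n x 1 ^ (r-2) * normH n x 1 ^ 2 ≤ normH n x 1 ^ (r-2) * normH n x 2 := by
      rw [← pow_add, show r - 2 + 2 = r from by omega, hpow]
      exact hch
    exact le_of_mul_le_mul_left h1 (pow_pos hH1pos _)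
  -- translate to sums
  have hS1 : normH n x 1 = (∑ i, x i) / n := by
    unfold normH; rw [esymmS_one, Nat.choose_one_right]
  have hS2 := esymmS_two n x
  have hC2pos : (0:ℝ) < (n.choose 2 : ℝ) := by exact_mod_cast Nat.choose_pos hn
  have hn0 : (0:ℝ) < n := by
    have : (2:ℝ) ≤ n := by exact_mod_cast hn
    linarith
  have hc2 : (n.choose 2 : ℝ) * 2 = ((n:ℝ) - 1) * n := by
    have hnat := Nat.choose_succ_right_eq n 1
    have hcast : ((n.choose 2 * 2 : ℕ) : ℝ) = ((n.choose 1 * (n - 1) : ℕ) : ℝ) := by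
      exact_mod_cast hnat
    push_cast [Nat.choose_one_right, Nat.cast_sub (show 1 ≤ n by omega)] at hcast
    linarith [hcast]
  set Sx := ∑ i, x i with hSx
  set q := ∑ i, (x i)^2 with hq
  -- from H1^2 ≤ H2 : n*q ≤ Sx^2
  have hkey : (n:ℝ) * q ≤ Sx ^ 2 := by
    have h3 : (Sx / n)^2 ≤ esymmS n x 2 / (n.choose 2 : ℝ) := by
      rw [← hS1]
      exact hH2.trans_eq (by unfold normH; norm_num)
    rw [div_pow, div_le_div_iff₀ (by positivity) hC2pos] at h3
    -- h3 : Sx^2 * choose2 ≤ S2 * n^2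
    have hS2' : esymmS n x 2 = (Sx^2 - q)/2 := by linarith [hS2]
    rw [hS2'] at h3
    have hCe : (n.choose 2 : ℝ) = ((n:ℝ)-1)*n/2 := by linarith
    rw [hCe] at h3
    nlinarith [h3, hn0]
  have hcs : Sx^2 ≤ (n:ℝ) * q := by
    have := cs_sq (Finset.univ : Finset (Fin n)) x
    simpa [Finset.card_univ] using this
  have hzero : ∑ i, ∑ j, (x i - x j)^2 = 0 := by
    have he := expand_sq (Finset.univ : Finset (Fin n)) x
    simp only [Finset.card_univ, Fintype.card_fin] at he
    rw [he, ← hSx, ← hq]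
    linarith
  intro i j
  have hall := (Finset.sum_eq_zero_iff_of_nonneg (fun i _ =>
    Finset.sum_nonneg (fun j _ => sq_nonneg (x i - x j)))).1 hzero i (Finset.mem_univ i)
  have hij := (Finset.sum_eq_zero_iff_of_nonneg (fun j _ =>
    sq_nonneg (x i - x j))).1 hall j (Finset.mem_univ j)
  have := pow_eq_zero_iff (n := 2) (by omega) |>.1 hij
  linarith [sub_eq_zero.1 this]
end

section
/- Newton's inequality equality case: for real numbers x_1,…,x_n, if H_k² = H_{k+1}H_{k−1} and H_{k+1}H_{k-1} ≠ 0 pattern holds with all H_j > 0 for j ≤ k+1 (x in the positive cone), then equality H_k² = H_{k+1}H_{k−1} forces x_1 = ⋯ = x_n. -/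
lemma esymmS_eq_multiset (n : ℕ) (x : Fin n → ℝ) (k : ℕ) :
    esymmS n x k = ((Finset.univ : Finset (Fin n)).val.map x).esymm k := by
  unfold esymmS
  rw [Finset.esymm_map_val]

lemma msym_cons (a : ℝ) (s : Multiset ℝ) (k : ℕ) :
    (a ::ₘ s).esymm (k+1) = s.esymm (k+1) + a * s.esymm k := by
  unfold Multiset.esymm
  rw [Multiset.powersetCard_cons, Multiset.map_add, Multiset.sum_add, Multiset.map_map]
  congr 1
  rw [← Multiset.sum_map_mul_left]
  congr 1
  apply Multiset.map_congr rfl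
  intro t _
  simp [Multiset.prod_cons]

lemma esymmS_succ (n : ℕ) (x : Fin (n+1) → ℝ) (k : ℕ) :
    esymmS (n+1) x (k+1) = esymmS n (x ∘ Fin.castSucc) (k+1)
      + x (Fin.last n) * esymmS n (x ∘ Fin.castSucc) k := by
  rw [esymmS_eq_multiset, esymmS_eq_multiset, esymmS_eq_multiset]
  have h : ((Finset.univ : Finset (Fin (n+1))).val.map x)
      = x (Fin.last n) ::ₘ ((Finset.univ : Finset (Fin n)).val.map (x ∘ Fin.castSucc)) := by
    conv_lhs => rw [Fin.univ_castSuccEmb]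
    rw [Finset.cons_val, Multiset.map_cons, Finset.map_val, Multiset.map_map]
    rfl
  rw [h, msym_cons]

lemma esymmS_zero (n : ℕ) (x : Fin n → ℝ) : esymmS n x 0 = 1 := by
  simp [esymmS]

lemma esymmS_pos (n : ℕ) (x : Fin n → ℝ) (k : ℕ) (hk : k ≤ n) (hx : ∀ i, 0 < x i) :
    0 < esymmS n x k := by
  unfold esymmS
  apply Finset.sum_pos
  · intro A _
    exact Finset.prod_pos fun i _ => hx i
  · apply Finset.powersetCard_nonempty_of_le
    simpa using hk

lemma esymmS_of_gt (n : ℕ) (x : Fin n → ℝ) (k : ℕ) (hk : n < k) : esymmS n x k = 0 := by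
  unfold esymmS
  rw [Finset.powersetCard_eq_empty.2 (by simpa using hk), Finset.sum_empty]

lemma normH_zero (n : ℕ) (x : Fin n → ℝ) : normH n x 0 = 1 := by
  simp [normH, esymmS_zero]

lemma normH_pos (n : ℕ) (x : Fin n → ℝ) (k : ℕ) (hk : k ≤ n) (hx : ∀ i, 0 < x i) :
    0 < normH n x k := by
  apply div_pos (esymmS_pos n x k hk hx)
  exact_mod_cast Nat.choose_pos hk

lemma esymmS_eq_normH_mul (n : ℕ) (x : Fin n → ℝ) (k : ℕ) :
    esymmS n x k = normH n x k * (n.choose k) := by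
  rcases le_or_gt k n with h | h
  · rw [normH, div_mul_cancel₀]
    exact_mod_cast (Nat.choose_pos h).ne'
  · rw [esymmS_of_gt n x k h, normH, esymmS_of_gt n x k h, zero_div, zero_mul]

lemma normH_const (n : ℕ) (c : ℝ) (k : ℕ) (hk : k ≤ n) :
    normH n (fun _ => c) k = c ^ k := by
  have h : esymmS n (fun _ => c) k = (n.choose k) * c ^ k := by
    unfold esymmS
    rw [Finset.sum_congr rfl (fun A hA => ?_), Finset.sum_const, nsmul_eq_mul,
      Finset.card_powersetCard, Finset.card_univ, Fintype.card_fin]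
    rw [Finset.prod_const, (Finset.mem_powersetCard.1 hA).2]
  have hC : ((n.choose k : ℕ) : ℝ) ≠ 0 := by exact_mod_cast (Nat.choose_pos hk).ne'
  rw [normH, h, mul_comm, mul_div_assoc, div_self hC, mul_one]

lemma normH_succ (n : ℕ) (x : Fin (n+1) → ℝ) (j : ℕ) (hj : j ≤ n + 1) :
    normH (n+1) x j = (((n:ℝ) + 1 - (j:ℝ)) / ((n:ℝ) + 1)) * normH n (x ∘ Fin.castSucc) j
      + ((j:ℝ) / ((n:ℝ) + 1)) * x (Fin.last n) * normH n (x ∘ Fin.castSucc) (j - 1) := by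
  have hN : ((n:ℝ) + 1) ≠ 0 := by positivity
  rcases j with _ | m
  · simp [normH_zero, div_self hN]
  · have hC : (((n+1).choose (m+1) : ℕ) : ℝ) ≠ 0 := by
      exact_mod_cast (Nat.choose_pos hj).ne'
    have h1 : ((n.choose (m+1) : ℕ) : ℝ) * ((n:ℝ) + 1)
        = (((n+1).choose (m+1) : ℕ) : ℝ) * (((n:ℝ) + 1) - ((m:ℝ) + 1)) := by
      have h := congrArg (Nat.cast (R := ℝ)) (Nat.choose_mul_succ_eq n (m+1))
      push_cast [Nat.cast_sub (Nat.succ_le_succ_iff.mp hj)] at h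
      linear_combination h
    have h2 : ((n:ℝ) + 1) * ((n.choose m : ℕ) : ℝ)
        = (((n+1).choose (m+1) : ℕ) : ℝ) * ((m:ℝ) + 1) := by
      exact_mod_cast congrArg (Nat.cast (R := ℝ)) (Nat.add_one_mul_choose_eq n m)
    rw [normH, esymmS_succ, esymmS_eq_normH_mul n _ (m+1), esymmS_eq_normH_mul n _ m]
    have hs : (m + 1) - 1 = m := rfl
    rw [hs]
    push_cast
    field_simp
    linear_combination (normH n (x ∘ Fin.castSucc) (m+1)) * h1
      + (x (Fin.last n) * normH n (x ∘ Fin.castSucc) m) * h2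

lemma esymmS_two_one (x : Fin 2 → ℝ) : esymmS 2 x 1 = x 0 + x 1 := by
  simp [esymmS, Finset.powersetCard_one, Finset.sum_map, Fin.sum_univ_two]

lemma esymmS_two_two (x : Fin 2 → ℝ) : esymmS 2 x 2 = x 0 * x 1 := by
  have h : Finset.powersetCard 2 (Finset.univ : Finset (Fin 2)) = {Finset.univ} := by
    simpa using Finset.powersetCard_self (Finset.univ : Finset (Fin 2))
  unfold esymmS
  rw [h, Finset.sum_singleton, Fin.prod_univ_two]

lemma newton_key (N K t a0 a1 a2 a3 : ℝ) (hN : N ≠ 0) :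
    N^2 * ((((N-K)/N)*a2 + (K/N)*t*a1)^2
      - (((N-(K+1))/N)*a3 + ((K+1)/N)*t*a2) * (((N-(K-1))/N)*a1 + ((K-1)/N)*t*a0))
    = (a2 - t*a1)^2 + (N-K+1)*((N-K-1)*(a2^2 - a3*a1))
      + t*((N-K-1)*((K-1)*(a2*a1 - a3*a0))) + (K+1)*t^2*((K-1)*(a1^2 - a2*a0)) := by
  field_simp
  ring

set_option maxHeartbeats 2000000 in
lemma newton_main : ∀ n : ℕ, 2 ≤ n → ∀ x : Fin n → ℝ, (∀ i, 0 < x i) →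
    ∀ k : ℕ, 1 ≤ k → k ≤ n - 1 →
    normH n x (k+1) * normH n x (k-1) ≤ normH n x k ^ 2 ∧
    (normH n x k ^ 2 = normH n x (k+1) * normH n x (k-1) → ∀ i j, x i = x j) := by
  intro n hn
  induction n, hn using Nat.le_induction with
  | base =>
    intro x hx k hk1 hk
    have hk1' : k = 1 := by omega
    subst hk1'
    have h1 : normH 2 x 1 = (x 0 + x 1) / 2 := by
      rw [normH, esymmS_two_one]; norm_num
    have h2 : normH 2 x 2 = x 0 * x 1 := by
      rw [normH, esymmS_two_two]; norm_num
    have h0 : normH 2 x 0 = 1 := normH_zero 2 x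
    have e2 : normH 2 x (1+1) = x 0 * x 1 := by norm_num [h2]
    have e0 : normH 2 x (1-1) = 1 := by norm_num [h0]
    constructor
    · rw [h1, e2, e0]
      nlinarith [sq_nonneg (x 0 - x 1)]
    · intro he
      rw [h1, e2, e0] at he
      have hx01 : x 0 = x 1 := by nlinarith [sq_nonneg (x 0 - x 1)]
      intro i j
      fin_cases i <;> fin_cases j <;> simp_all
  | succ n hn IH =>
    intro x hx k hk1 hk
    have hkn : k ≤ n := by omega
    have hx' : ∀ i, 0 < (x ∘ Fin.castSucc) i := fun i => hx _
    have ht : 0 < x (Fin.last n) := hx _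
    have hN : ((n:ℝ) + 1) ≠ 0 := by positivity
    have hkR : (k:ℝ) ≤ (n:ℝ) := Nat.cast_le.mpr hkn
    have hk1R : (1:ℝ) ≤ (k:ℝ) := by exact_mod_cast hk1
    -- recursion formulas
    have bk := normH_succ n x k (by omega)
    have bk1 := normH_succ n x (k+1) (by omega)
    push_cast at bk1
    have bkm := normH_succ n x (k-1) (by omega)
    push_cast [Nat.cast_sub hk1] at bkm
    rw [show k - 1 - 1 = k - 2 from by omega] at bkm
    -- abbreviations as plain terms
    have hmain : ((n:ℝ)+1)^2 * (normH (n+1) x k ^ 2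
        - normH (n+1) x (k+1) * normH (n+1) x (k-1))
        = (normH n (x ∘ Fin.castSucc) k - x (Fin.last n) * normH n (x ∘ Fin.castSucc) (k-1))^2
          + ((n:ℝ)+1-(k:ℝ)+1)*(((n:ℝ)+1-(k:ℝ)-1)*((normH n (x ∘ Fin.castSucc) k)^2
              - normH n (x ∘ Fin.castSucc) (k+1) * normH n (x ∘ Fin.castSucc) (k-1)))
          + x (Fin.last n)*(((n:ℝ)+1-(k:ℝ)-1)*(((k:ℝ)-1)*(normH n (x ∘ Fin.castSucc) k
              * normH n (x ∘ Fin.castSucc) (k-1) - normH n (x ∘ Fin.castSucc) (k+1)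
              * normH n (x ∘ Fin.castSucc) (k-2))))
          + ((k:ℝ)+1)*(x (Fin.last n))^2*(((k:ℝ)-1)*((normH n (x ∘ Fin.castSucc) (k-1))^2
              - normH n (x ∘ Fin.castSucc) k * normH n (x ∘ Fin.castSucc) (k-2))) := by
      rw [bk, bk1, bkm]
      exact newton_key ((n:ℝ)+1) (k:ℝ) (x (Fin.last n)) (normH n (x ∘ Fin.castSucc) (k-2))
        (normH n (x ∘ Fin.castSucc) (k-1)) (normH n (x ∘ Fin.castSucc) k)
        (normH n (x ∘ Fin.castSucc) (k+1)) hN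
    have hapos : ∀ j, j ≤ n → 0 < normH n (x ∘ Fin.castSucc) j :=
      fun j hj => normH_pos n _ j hj hx'
    -- the three protected inequalities
    have P1 : 0 ≤ ((n:ℝ)+1-(k:ℝ)-1)*((normH n (x ∘ Fin.castSucc) k)^2
        - normH n (x ∘ Fin.castSucc) (k+1) * normH n (x ∘ Fin.castSucc) (k-1)) := by
      rcases eq_or_lt_of_le hkn with h | h
      · rw [show ((n:ℝ)+1-(k:ℝ)-1) = 0 from by subst h; push_cast; ring, zero_mul]
      · have hIH := (IH _ hx' k hk1 (by omega)).1
        apply mul_nonneg (by push_cast; linarith [(Nat.cast_lt (α := ℝ)).mpr h])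
        linarith
    have P2 : 0 ≤ ((k:ℝ)-1)*((normH n (x ∘ Fin.castSucc) (k-1))^2
        - normH n (x ∘ Fin.castSucc) k * normH n (x ∘ Fin.castSucc) (k-2)) := by
      rcases eq_or_lt_of_le hk1 with h | h
      · rw [show ((k:ℝ)-1) = 0 from by rw [← h]; norm_num, zero_mul]
      · have hIH := (IH _ hx' (k-1) (by omega) (by omega)).1
        rw [show k - 1 + 1 = k from by omega, show k - 1 - 1 = k - 2 from by omega] at hIH
        apply mul_nonneg (by linarith [(Nat.one_lt_cast (α := ℝ)).mpr h])
        linarith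
    have P3 : 0 ≤ ((n:ℝ)+1-(k:ℝ)-1)*(((k:ℝ)-1)*(normH n (x ∘ Fin.castSucc) k
        * normH n (x ∘ Fin.castSucc) (k-1) - normH n (x ∘ Fin.castSucc) (k+1)
        * normH n (x ∘ Fin.castSucc) (k-2))) := by
      rcases eq_or_lt_of_le hkn with h | h
      · rw [show ((n:ℝ)+1-(k:ℝ)-1) = 0 from by subst h; push_cast; ring, zero_mul]
      rcases eq_or_lt_of_le hk1 with h1 | h1
      · rw [show ((k:ℝ)-1) = 0 from by rw [← h1]; norm_num, zero_mul, mul_zero]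
      have hIHa := (IH _ hx' k hk1 (by omega)).1
      have hIHb := (IH _ hx' (k-1) (by omega) (by omega)).1
      rw [show k - 1 + 1 = k from by omega, show k - 1 - 1 = k - 2 from by omega] at hIHb
      have p1 := hapos k hkn
      have p2 := hapos (k-1) (by omega)
      have p3 := hapos (k+1) (by omega)
      have p4 := hapos (k-2) (by omega)
      have key : normH n (x ∘ Fin.castSucc) (k+1) * normH n (x ∘ Fin.castSucc) (k-2)
          ≤ normH n (x ∘ Fin.castSucc) k * normH n (x ∘ Fin.castSucc) (k-1) := by
        nlinarith [mul_le_mul hIHa hIHb (by positivity) (by positivity), mul_pos p1 p2]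
      apply mul_nonneg (by linarith [(Nat.cast_lt (α := ℝ)).mpr h])
      apply mul_nonneg (by linarith [(Nat.one_lt_cast (α := ℝ)).mpr h1])
      linarith
    have hcoef1 : (0:ℝ) ≤ (n:ℝ)+1-(k:ℝ)+1 := by linarith
    have hsum : 0 ≤ ((n:ℝ)+1)^2 * (normH (n+1) x k ^ 2
        - normH (n+1) x (k+1) * normH (n+1) x (k-1)) := by
      rw [hmain]
      have t1 := sq_nonneg (normH n (x ∘ Fin.castSucc) k
        - x (Fin.last n) * normH n (x ∘ Fin.castSucc) (k-1))
      have t2 := mul_nonneg hcoef1 P1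
      have t3 := mul_nonneg ht.le P3
      have t4 := mul_nonneg (mul_nonneg (by linarith : (0:ℝ) ≤ (k:ℝ)+1)
        (sq_nonneg (x (Fin.last n)))) P2
      rw [mul_assoc ((k:ℝ)+1)]
      linarith
    have hNsq : (0:ℝ) < ((n:ℝ)+1)^2 := by positivity
    constructor
    · have := (mul_nonneg_iff_of_pos_left hNsq).mp hsum
      linarith
    · intro he
      have hz : ((n:ℝ)+1)^2 * (normH (n+1) x k ^ 2
          - normH (n+1) x (k+1) * normH (n+1) x (k-1)) = 0 := by rw [he]; ring
      rw [hmain] at hz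
      have t1 := sq_nonneg (normH n (x ∘ Fin.castSucc) k
        - x (Fin.last n) * normH n (x ∘ Fin.castSucc) (k-1))
      have t2 := mul_nonneg hcoef1 P1
      have t3 := mul_nonneg ht.le P3
      have t4 := mul_nonneg (mul_nonneg (by linarith : (0:ℝ) ≤ (k:ℝ)+1)
        (sq_nonneg (x (Fin.last n)))) P2
      rw [mul_assoc ((k:ℝ)+1)] at hz
      -- each term vanishes
      have e1 : normH n (x ∘ Fin.castSucc) k
          = x (Fin.last n) * normH n (x ∘ Fin.castSucc) (k-1) := by
        have : (normH n (x ∘ Fin.castSucc) k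
            - x (Fin.last n) * normH n (x ∘ Fin.castSucc) (k-1))^2 = 0 := by linarith
        have := pow_eq_zero_iff (n := 2) (by norm_num) |>.mp this
        linarith
      -- x' is constant
      have hconst : ∀ i j, (x ∘ Fin.castSucc) i = (x ∘ Fin.castSucc) j := by
        rcases eq_or_lt_of_le hkn with hcase | hcase
        · -- k = n : use the fourth term
          have hk2 : 2 ≤ k := by omega
          have ez : ((k:ℝ)+1)*((x (Fin.last n))^2*(((k:ℝ)-1)*((normH n (x ∘ Fin.castSucc) (k-1))^2
              - normH n (x ∘ Fin.castSucc) k * normH n (x ∘ Fin.castSucc) (k-2)))) = 0 := by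
            linarith
          have hc1 : ((k:ℝ)+1) ≠ 0 := by positivity
          have hc2 : (x (Fin.last n))^2 ≠ 0 := by positivity
          have hc3 : ((k:ℝ)-1) ≠ 0 := by
            have : (2:ℝ) ≤ (k:ℝ) := by exact_mod_cast hk2
            linarith
          have hzz : (normH n (x ∘ Fin.castSucc) (k-1))^2
              = normH n (x ∘ Fin.castSucc) k * normH n (x ∘ Fin.castSucc) (k-2) := by
            rcases mul_eq_zero.mp ez with h' | h'
            · exact absurd h' hc1
            rcases mul_eq_zero.mp h' with h'' | h''
            · exact absurd h'' hc2
            rcases mul_eq_zero.mp h'' with h3 | h3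
            · exact absurd h3 hc3
            linarith
          have := (IH _ hx' (k-1) (by omega) (by omega)).2
          rw [show k - 1 + 1 = k from by omega, show k - 1 - 1 = k - 2 from by omega] at this
          exact this hzz
        · -- k < n : use the second term
          have ez : ((n:ℝ)+1-(k:ℝ)+1)*(((n:ℝ)+1-(k:ℝ)-1)*((normH n (x ∘ Fin.castSucc) k)^2
              - normH n (x ∘ Fin.castSucc) (k+1) * normH n (x ∘ Fin.castSucc) (k-1))) = 0 := by
            linarith
          have hc1 : ((n:ℝ)+1-(k:ℝ)+1) ≠ 0 := by linarith
          have hc2 : ((n:ℝ)+1-(k:ℝ)-1) ≠ 0 := by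
            have := (Nat.cast_lt (α := ℝ)).mpr hcase
            linarith
          have hzz : (normH n (x ∘ Fin.castSucc) k)^2
              = normH n (x ∘ Fin.castSucc) (k+1) * normH n (x ∘ Fin.castSucc) (k-1) := by
            rcases mul_eq_zero.mp ez with h' | h'
            · exact absurd h' hc1
            rcases mul_eq_zero.mp h' with h'' | h''
            · exact absurd h'' hc2
            linarith
          exact (IH _ hx' k hk1 (by omega)).2 hzz
      -- now deduce all coordinates equal
      have hc0 : 0 < n := by omega
      have hall : ∀ i, (x ∘ Fin.castSucc) i = (x ∘ Fin.castSucc) ⟨0, hc0⟩ :=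
        fun i => hconst i _
      set c : ℝ := (x ∘ Fin.castSucc) ⟨0, hc0⟩ with hcdef
      have hfun : (x ∘ Fin.castSucc) = fun _ => c := funext hall
      have hc : 0 < c := hx' _
      have hak : normH n (x ∘ Fin.castSucc) k = c^k := by
        rw [hfun, normH_const n c k hkn]
      have hakm : normH n (x ∘ Fin.castSucc) (k-1) = c^(k-1) := by
        rw [hfun, normH_const n c (k-1) (by omega)]
      have htc : x (Fin.last n) = c := by
        rw [hak, hakm] at e1
        have hp : c^(k-1) ≠ 0 := (pow_pos hc _).ne'
        have hsplit : c^k = c * c^(k-1) := by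
          conv_lhs => rw [show k = (k-1)+1 from by omega]
          rw [pow_succ]
          ring
        apply mul_right_cancel₀ hp
        rw [← hsplit, e1]
      have hxa : ∀ i : Fin (n+1), x i = c := by
        intro i
        rcases Fin.eq_castSucc_or_eq_last i with ⟨j', rfl⟩ | rfl
        · exact hall j'
        · exact htc
      intro i j
      rw [hxa i, hxa j]
    

/-- Equality case of Newton's inequality: for positive `x`, if
`H_k² = H_{k+1}·H_{k-1}` then all `x_i` are equal. -/
theorem newton_equality_case (n k : ℕ) (hn : 2 ≤ n) (hk1 : 1 ≤ k) (hk : k ≤ n - 1)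
    (x : Fin n → ℝ) (hx : ∀ i, 0 < x i)
    (heq : (normH n x k) ^ 2 = normH n x (k + 1) * normH n x (k - 1)) :
    ∀ i j, x i = x j :=
  (newton_main n hn x hx k hk1 hk).2 heq
end
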